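/- For integers p ≥ 3, q ≥ 3, s ≥ 0 and n = p + q + s - 1, the graph S_n^{p,q} obtained from cycles C_p and C_q sharing exactly one common vertex w, with s pendent edges attached at w, satisfies D_R(S_n^{p,q}) = (1/3)[-p^3 - q^3 + (2n+1)(p^2+q^2) + (1-9n)(p+q) + 9n^2 + 5n - 2]. -/

import Mathlib

open Finset

/-- The effective resistance between `a` and `b` in the electrical network obtained
from `G` by replacing each edge with a unit resistor, defined via Thomson's
principle as the minimal energy of a unit flow from `a` to `b`. -/
noncomputable def eRes {V : Type*} [Fintype V] (G : SimpleGraph V) (a b : V) : ℝ :=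
  sInf { E : ℝ | ∃ f : V → V → ℝ,
    (∀ u v, f u v = - f v u) ∧
    (∀ u v, ¬ G.Adj u v → f u v = 0) ∧
    (∀ v, v ≠ a → v ≠ b → ∑ u, f v u = 0) ∧
    (∑ u, f a u = 1) ∧
    E = (1/2) * ∑ u, ∑ v, (f u v)^2 }

/-- The degree of a vertex. -/
noncomputable def vdeg {V : Type*} (G : SimpleGraph V) (v : V) : ℕ :=
  Nat.card (G.neighborSet v)

/-- `Kf_v(G)`, the sum of resistance distances from `v` to all vertices. -/
noncomputable def KfAt {V : Type*} [Fintype V] (G : SimpleGraph V) (v : V) : ℝ :=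
  ∑ u : V, eRes G u v

/-- The Kirchhoff index `Kf(G) = Σ_{{u,v}} r(u,v)`. -/
noncomputable def Kf {V : Type*} [Fintype V] (G : SimpleGraph V) : ℝ :=
  (1/2) * ∑ v : V, ∑ u : V, eRes G u v

/-- `D_v(G) = Σ_u d(u) r(u,v)`. -/
noncomputable def DAt {V : Type*} [Fintype V] (G : SimpleGraph V) (v : V) : ℝ :=
  ∑ u : V, (vdeg G u : ℝ) * eRes G u v

/-- The degree resistance distance `D_R(G) = Σ_{{u,v}} (d(u)+d(v)) r(u,v)`. -/
noncomputable def DR {V : Type*} [Fintype V] (G : SimpleGraph V) : ℝ :=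
  (1/2) * ∑ v : V, ∑ u : V, ((vdeg G u : ℝ) + (vdeg G v : ℝ)) * eRes G u v


/-- `S_n^{p,q}`: the cycles `C_p` (on vertices `0,…,p-1`) and `C_q`
(on vertices `0, p, p+1, …, p+q-2`) share exactly the vertex `0`, and the
remaining `n+1-p-q` vertices are pendent vertices attached to `0`. -/
def SGraph (p q n : ℕ) : SimpleGraph (Fin n) :=
  SimpleGraph.fromRel (fun a b =>
    (b.val = a.val + 1 ∧ b.val ≤ p - 1) ∨
    (a.val = 0 ∧ b.val = p - 1) ∨
    (a.val = 0 ∧ b.val = p) ∨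
    (p ≤ a.val ∧ b.val = a.val + 1 ∧ b.val ≤ p + q - 2) ∨
    (a.val = 0 ∧ b.val = p + q - 2) ∨
    (a.val = 0 ∧ p + q - 1 ≤ b.val))

namespace DRaux
attribute [local instance] Classical.propDecidable

variable {V : Type*} [Fintype V]

noncomputable def divg (G : SimpleGraph V) (φ : V → ℝ) (v : V) : ℝ :=
  ∑ u, if G.Adj v u then φ v - φ u else 0

lemma sum_sum_antisymm (f : V → V → ℝ) (h : ∀ u v, f u v = - f v u) :
    ∑ u, ∑ v, f u v = 0 := by
  have h2 : ∑ u : V, ∑ v : V, f u v = - ∑ u : V, ∑ v : V, f u v := by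
    conv_lhs => rw [Finset.sum_comm]
    rw [← Finset.sum_neg_distrib]
    refine Finset.sum_congr rfl fun v _ => ?_
    rw [← Finset.sum_neg_distrib]
    exact Finset.sum_congr rfl fun u _ => h u v
  linarith

lemma pairing (f : V → V → ℝ) (φ : V → ℝ) (h : ∀ u v, f u v = - f v u) :
    ∑ u, ∑ v, f u v * (φ u - φ v) = 2 * ∑ u, φ u * ∑ v, f u v := by
  have e1 : ∑ u : V, ∑ v : V, f u v * (φ u - φ v)
      = (∑ u : V, φ u * ∑ v : V, f u v) - ∑ u : V, ∑ v : V, f u v * φ v := by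
    rw [← Finset.sum_sub_distrib]
    refine Finset.sum_congr rfl fun u _ => ?_
    rw [Finset.mul_sum, ← Finset.sum_sub_distrib]
    refine Finset.sum_congr rfl fun v _ => by ring
  have e2 : ∑ u : V, ∑ v : V, f u v * φ v = - ∑ u : V, φ u * ∑ v : V, f u v := by
    rw [Finset.sum_comm]
    rw [← Finset.sum_neg_distrib]
    refine Finset.sum_congr rfl fun v _ => ?_
    rw [Finset.mul_sum, ← Finset.sum_neg_distrib]
    refine Finset.sum_congr rfl fun u _ => by rw [h u v]; ring
  rw [e1, e2]; ring

lemma eRes_self (G : SimpleGraph V) (a : V) : eRes G a a = 0 := by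
  unfold eRes
  have : { E : ℝ | ∃ f : V → V → ℝ,
    (∀ u v, f u v = - f v u) ∧
    (∀ u v, ¬ G.Adj u v → f u v = 0) ∧
    (∀ v, v ≠ a → v ≠ a → ∑ u, f v u = 0) ∧
    (∑ u, f a u = 1) ∧
    E = (1/2) * ∑ u, ∑ v, (f u v)^2 } = ∅ := by
    rw [Set.eq_empty_iff_forall_notMem]
    rintro E ⟨f, hanti, -, hcons, hunit, -⟩
    have htot : ∑ u : V, ∑ v : V, f u v = 0 := sum_sum_antisymm f hanti
    have : ∑ u : V, ∑ v : V, f u v = ∑ u : V, (if u = a then (1:ℝ) else 0) := by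
      refine Finset.sum_congr rfl fun u _ => ?_
      by_cases hu : u = a
      · subst hu; simpa using hunit
      · simp [hu, hcons u hu hu]
    rw [this] at htot
    simp at htot
  rw [this, Real.sInf_empty]

/-- Thomson's principle: a potential flow realizes the effective resistance. -/
lemma eRes_eq_potential (G : SimpleGraph V) (φ : V → ℝ) (a b : V) (hab : a ≠ b)
    (h1 : ∀ v, v ≠ a → v ≠ b → divg G φ v = 0) (h2 : divg G φ a = 1) :
    eRes G a b = φ a - φ b := by
  classical
  set F : V → V → ℝ := fun u v => if G.Adj u v then φ u - φ v else 0 with hF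
  have hFanti : ∀ u v, F u v = - F v u := by
    intro u v
    by_cases h : G.Adj u v
    · simp only [hF]; rw [if_pos h, if_pos (G.adj_symm h)]; ring
    · have h' : ¬ G.Adj v u := fun hh => h (G.adj_symm hh)
      simp [hF, h, h']
  have hFdiv : ∀ v, ∑ u, F v u = divg G φ v := fun v => rfl
  have hFa : ∑ u, F a u = 1 := (hFdiv a).trans h2
  have hFtot := sum_sum_antisymm F hFanti
  have hdivsplit : ∀ (g : V → V → ℝ), (∀ u v, g u v = - g v u) →
      (∀ v, v ≠ a → v ≠ b → ∑ u, g v u = 0) → (∑ u, g a u = 1) →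
      (∑ u, g b u = -1) := by
    intro g hanti hcons hunit
    have htot : ∑ v : V, ∑ u : V, g v u = 0 := sum_sum_antisymm g hanti
    have : ∑ v : V, ∑ u : V, g v u
        = ∑ v : V, ((if v = a then (1:ℝ) else 0) + (if v = b then ∑ u, g b u else 0)) := by
      refine Finset.sum_congr rfl fun v _ => ?_
      by_cases hva : v = a
      · subst hva; simp [hunit, hab]
      · by_cases hvb : v = b
        · subst hvb; simp [hva]
        · simp [hva, hvb, hcons v hva hvb]
    rw [this, Finset.sum_add_distrib] at htot
    simp [Finset.sum_ite_eq'] at htot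
    linarith
  have hFb : ∑ u, F b u = -1 := by
    refine hdivsplit F hFanti ?_ hFa
    intro v hv1 hv2; exact h1 v hv1 hv2
  -- energy of F
  have henergy : ∑ u : V, ∑ v : V, (F u v)^2 = 2 * (φ a - φ b) := by
    have e1 : ∑ u : V, ∑ v : V, (F u v)^2 = ∑ u : V, ∑ v : V, F u v * (φ u - φ v) := by
      refine Finset.sum_congr rfl fun u _ => Finset.sum_congr rfl fun v _ => ?_
      by_cases h : G.Adj u v <;> simp [hF, h] <;> ring
    rw [e1, pairing F φ hFanti]
    have e2 : ∑ u : V, φ u * ∑ v : V, F u v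
        = ∑ u : V, ((if u = a then φ a else 0) + (if u = b then -φ b else 0)) := by
      refine Finset.sum_congr rfl fun u _ => ?_
      by_cases hua : u = a
      · subst hua; simp [hFa, hab]
      · by_cases hub : u = b
        · subst hub; simp [hua, hFb]
        · simp [hua, hub, hFdiv, h1 u hua hub]
    rw [e2, Finset.sum_add_distrib]
    simp [Finset.sum_ite_eq']
    ring
  have hmem : (φ a - φ b) ∈ { E : ℝ | ∃ f : V → V → ℝ,
      (∀ u v, f u v = - f v u) ∧
      (∀ u v, ¬ G.Adj u v → f u v = 0) ∧
      (∀ v, v ≠ a → v ≠ b → ∑ u, f v u = 0) ∧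
      (∑ u, f a u = 1) ∧
      E = (1/2) * ∑ u, ∑ v, (f u v)^2 } := by
    refine ⟨F, hFanti, ?_, ?_, hFa, by rw [henergy]; ring⟩
    · intro u v h; simp [hF, h]
    · intro v hv1 hv2; exact h1 v hv1 hv2
  have hlb : ∀ E ∈ { E : ℝ | ∃ f : V → V → ℝ,
      (∀ u v, f u v = - f v u) ∧
      (∀ u v, ¬ G.Adj u v → f u v = 0) ∧
      (∀ v, v ≠ a → v ≠ b → ∑ u, f v u = 0) ∧
      (∑ u, f a u = 1) ∧
      E = (1/2) * ∑ u, ∑ v, (f u v)^2 }, (φ a - φ b) ≤ E := by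
    rintro E ⟨f, hanti, hsupp, hcons, hunit, hE⟩
    set g : V → V → ℝ := fun u v => f u v - F u v with hg
    have hganti : ∀ u v, g u v = - g v u := by
      intro u v; simp [hg, hanti u v, hFanti u v]; ring
    have hgrow : ∀ u, ∑ v, g u v = 0 := by
      intro u
      have : ∑ v, g u v = (∑ v, f u v) - ∑ v, F u v := by
        rw [← Finset.sum_sub_distrib]
      rw [this]
      by_cases hua : u = a
      · subst hua; rw [hunit, hFa]; ring
      · by_cases hub : u = b
        · subst hub
          rw [hdivsplit f hanti hcons hunit, hFb]; ring
        · rw [hcons u hua hub, hFdiv, h1 u hua hub]; ring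
    have hcross : ∑ u : V, ∑ v : V, F u v * g u v = 0 := by
      have e1 : ∑ u : V, ∑ v : V, F u v * g u v
          = ∑ u : V, ∑ v : V, g u v * (φ u - φ v) := by
        refine Finset.sum_congr rfl fun u _ => Finset.sum_congr rfl fun v _ => ?_
        by_cases h : G.Adj u v
        · simp [hF, h]; ring
        · have : g u v = 0 := by simp [hg, hF, h, hsupp u v h]
          simp [hF, h, this]
      rw [e1, pairing g φ hganti]
      simp [hgrow]
    have hsq : ∑ u : V, ∑ v : V, (f u v)^2
        = (∑ u : V, ∑ v : V, (F u v)^2) + 2 * (∑ u : V, ∑ v : V, F u v * g u v)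
          + ∑ u : V, ∑ v : V, (g u v)^2 := by
      have : ∀ u v : V, (f u v)^2 = (F u v)^2 + 2 * (F u v * g u v) + (g u v)^2 := by
        intro u v
        have : f u v = F u v + g u v := by simp [hg]
        rw [this]; ring
      simp_rw [this, Finset.sum_add_distrib, Finset.mul_sum]
    have hgnn : 0 ≤ ∑ u : V, ∑ v : V, (g u v)^2 :=
      Finset.sum_nonneg fun u _ => Finset.sum_nonneg fun v _ => sq_nonneg _
    rw [hE, hsq, hcross]
    have := henergy
    linarith
  refine le_antisymm ?_ ?_
  · exact csInf_le ⟨φ a - φ b, hlb⟩ hmem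
  · exact le_csInf ⟨_, hmem⟩ hlb

end DRaux


namespace DRaux
attribute [local instance] Classical.propDecidable

def RR (p q x y : ℕ) : Prop :=
  (y = x + 1 ∧ y ≤ p - 1) ∨ (x = 0 ∧ y = p - 1) ∨ (x = 0 ∧ y = p) ∨
  (p ≤ x ∧ y = x + 1 ∧ y ≤ p + q - 2) ∨ (x = 0 ∧ y = p + q - 2) ∨ (x = 0 ∧ p + q - 1 ≤ y)

def AdjV (p q x y : ℕ) : Prop := x ≠ y ∧ (RR p q x y ∨ RR p q y x)

lemma adj_val {p q n : ℕ} {u v : Fin n} :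
    (SGraph p q n).Adj u v ↔ AdjV p q u.val v.val := by
  show (SimpleGraph.fromRel _).Adj u v ↔ _
  rw [SimpleGraph.fromRel_adj]
  unfold AdjV RR
  rw [ne_eq, ne_eq, Fin.ext_iff]

noncomputable def cy (L k x : ℕ) : ℝ :=
  if x ≤ k then ((k:ℝ) - x) * ((L:ℝ) - k) / L else ((x:ℝ) - k) * k / L

lemma cy_zero (L k : ℕ) : cy L k 0 = (k:ℝ) * ((L:ℝ) - k) / L := by
  unfold cy; rw [if_pos (Nat.zero_le k)]; norm_num

lemma cy_wrap (L k : ℕ) (hk : k < L) : cy L k L = cy L k 0 := by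
  unfold cy
  rw [if_neg (by omega), if_pos (Nat.zero_le k)]
  push_cast; ring

lemma cy_of_le {L k x : ℕ} (h : x ≤ k) : cy L k x = ((k:ℝ) - x) * ((L:ℝ) - k) / L :=
  if_pos h

lemma cy_of_ge {L k x : ℕ} (h : k ≤ x) : cy L k x = ((x:ℝ) - k) * k / L := by
  unfold cy
  by_cases h' : x ≤ k
  · have hx : x = k := le_antisymm h' h
    subst hx; rw [if_pos le_rfl]; ring
  · rw [if_neg h']

lemma cy_harm (L k m : ℕ) (h1 : 1 ≤ m) (h2 : m < L) (h3 : m ≠ k) (hk : k < L) :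
    (cy L k m - cy L k (m-1)) + (cy L k m - cy L k (m+1)) = 0 := by
  have hm1 : ((m-1 : ℕ) : ℝ) = (m:ℝ) - 1 := by push_cast [h1]; ring
  rcases lt_or_gt_of_ne h3 with h | h
  · rw [cy_of_le (by omega), cy_of_le (by omega), cy_of_le (by omega), hm1]
    push_cast; ring
  · rw [cy_of_ge (by omega), cy_of_ge (by omega), cy_of_ge (by omega), hm1]
    push_cast; ring

lemma cy_sink (L k : ℕ) (h1 : 1 ≤ k) (h2 : k < L) :
    (cy L k k - cy L k (k-1)) + (cy L k k - cy L k (k+1)) = -1 := by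
  have hL : (L:ℝ) ≠ 0 := Nat.cast_ne_zero.2 (by omega)
  have hk1 : ((k-1 : ℕ) : ℝ) = (k:ℝ) - 1 := by push_cast [h1]; ring
  rw [cy_of_le le_rfl, cy_of_le (by omega), cy_of_ge (by omega), hk1]
  push_cast; field_simp; ring

lemma cy_source (L k : ℕ) (h1 : 1 ≤ k) (h2 : k < L) (h3 : 2 ≤ L) :
    (cy L k 0 - cy L k 1) + (cy L k 0 - cy L k (L-1)) = 1 := by
  have hL : (L:ℝ) ≠ 0 := Nat.cast_ne_zero.2 (by omega)
  have hL1 : ((L-1 : ℕ) : ℝ) = (L:ℝ) - 1 := by push_cast [show 1 ≤ L by omega]; ring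
  by_cases hk : k = L - 1
  · rw [cy_of_le (Nat.zero_le k), cy_of_le (by omega), cy_of_le (by omega), hL1]
    subst hk
    rw [hL1]; push_cast [show 1 ≤ L by omega]; field_simp; ring
  · rw [cy_of_le (Nat.zero_le k), cy_of_le (by omega), cy_of_ge (by omega), hL1]
    push_cast; field_simp; ring

end DRaux

namespace DRaux
attribute [local instance] Classical.propDecidable

noncomputable def Psi (p q t x : ℕ) : ℝ :=
  if t = 0 then 0
  else if t ≤ p - 1 then (if x < p then cy p t x else cy p t 0)
  else if t ≤ p + q - 2 then
    (if p ≤ x ∧ x ≤ p + q - 2 then cy q (t - p + 1) (x - p + 1) else cy q (t - p + 1) 0)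
  else (if x = t then 0 else 1)

lemma Psi_zero (p q x : ℕ) : Psi p q 0 x = 0 := if_pos rfl

lemma Psi_A {p q t : ℕ} (h1 : 1 ≤ t) (h2 : t ≤ p - 1) (x : ℕ) :
    Psi p q t x = if x < p then cy p t x else cy p t 0 := by
  unfold Psi; rw [if_neg (by omega), if_pos h2]

lemma Psi_B {p q t : ℕ} (hp : 3 ≤ p) (h1 : p ≤ t) (h2 : t ≤ p + q - 2) (x : ℕ) :
    Psi p q t x = if p ≤ x ∧ x ≤ p + q - 2 then cy q (t - p + 1) (x - p + 1)
      else cy q (t - p + 1) 0 := by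
  unfold Psi; rw [if_neg (by omega), if_neg (by omega), if_pos h2]

lemma Psi_P {p q t : ℕ} (hp : 3 ≤ p) (hq : 3 ≤ q) (h1 : p + q - 1 ≤ t) (x : ℕ) :
    Psi p q t x = if x = t then 0 else 1 := by
  unfold Psi; rw [if_neg (by omega), if_neg (by omega), if_neg (by omega)]

lemma sum_ite_one {n a1 : ℕ} (P : ℕ → Prop) (f : ℕ → ℝ) (h1 : a1 < n)
    (hiff : ∀ x, x < n → (P x ↔ x = a1)) :
    (∑ x ∈ range n, if P x then f x else 0) = f a1 := by
  have key : ∀ x ∈ range n, (if P x then f x else 0) = (if x = a1 then f x else 0) := by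
    intro x hx
    rw [mem_range] at hx
    by_cases e1 : x = a1
    · rw [if_pos ((hiff x hx).2 e1), if_pos e1]
    · rw [if_neg (fun h => e1 ((hiff x hx).1 h)), if_neg e1]
  rw [Finset.sum_congr rfl key, Finset.sum_ite_eq' (range n) a1 f, if_pos (mem_range.2 h1)]

lemma sum_ite_two {n a1 a2 : ℕ} (P : ℕ → Prop) (f : ℕ → ℝ)
    (h1 : a1 < n) (h2 : a2 < n) (hne : a1 ≠ a2)
    (hiff : ∀ x, x < n → (P x ↔ x = a1 ∨ x = a2)) :
    (∑ x ∈ range n, if P x then f x else 0) = f a1 + f a2 := by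
  have key : ∀ x ∈ range n, (if P x then f x else 0)
      = (if x = a1 then f x else 0) + (if x = a2 then f x else 0) := by
    intro x hx
    rw [mem_range] at hx
    by_cases e1 : x = a1
    · rw [if_pos ((hiff x hx).2 (Or.inl e1)), if_pos e1, if_neg (by omega), add_zero]
    · by_cases e2 : x = a2
      · rw [if_pos ((hiff x hx).2 (Or.inr e2)), if_neg e1, if_pos e2, zero_add]
      · rw [if_neg (fun h => by rcases (hiff x hx).1 h with h' | h' <;> omega),
          if_neg e1, if_neg e2, add_zero]
  rw [Finset.sum_congr rfl key, Finset.sum_add_distrib,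
    Finset.sum_ite_eq' (range n) a1 f, Finset.sum_ite_eq' (range n) a2 f,
    if_pos (mem_range.2 h1), if_pos (mem_range.2 h2)]

lemma sum_ite_zero_vertex {p q n : ℕ} (hp : 3 ≤ p) (hq : 3 ≤ q) (hn : p + q - 1 ≤ n)
    (f : ℕ → ℝ) :
    (∑ x ∈ range n, if AdjV p q 0 x then f x else 0)
      = f 1 + f (p-1) + f p + f (p+q-2)
        + ∑ x ∈ range n, if p + q - 1 ≤ x then f x else 0 := by
  have adj0 : ∀ x, x < n →
      (AdjV p q 0 x ↔ x = 1 ∨ x = p-1 ∨ x = p ∨ x = p+q-2 ∨ p+q-1 ≤ x) := by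
    intro x hx; unfold AdjV RR; omega
  have key : ∀ x ∈ range n, (if AdjV p q 0 x then f x else 0)
      = (((if x = 1 then f x else 0) + (if x = p-1 then f x else 0))
        + ((if x = p then f x else 0) + (if x = p+q-2 then f x else 0)))
        + (if p + q - 1 ≤ x then f x else 0) := by
    intro x hx
    rw [mem_range] at hx
    by_cases h : AdjV p q 0 x
    · rcases (adj0 x hx).1 h with h' | h' | h' | h' | h'
      · rw [if_pos h, if_pos h', if_neg (by omega), if_neg (by omega), if_neg (by omega),
          if_neg (by omega)]; ring
      · rw [if_pos h, if_neg (by omega), if_pos h', if_neg (by omega), if_neg (by omega),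
          if_neg (by omega)]; ring
      · rw [if_pos h, if_neg (by omega), if_neg (by omega), if_pos h', if_neg (by omega),
          if_neg (by omega)]; ring
      · rw [if_pos h, if_neg (by omega), if_neg (by omega), if_neg (by omega), if_pos h',
          if_neg (by omega)]; ring
      · rw [if_pos h, if_neg (by omega), if_neg (by omega), if_neg (by omega),
          if_neg (by omega), if_pos h']; ring
    · rw [if_neg h, if_neg (fun h' => h ((adj0 x hx).2 (by omega))),
        if_neg (fun h' => h ((adj0 x hx).2 (by omega))),
        if_neg (fun h' => h ((adj0 x hx).2 (by omega))),
        if_neg (fun h' => h ((adj0 x hx).2 (by omega))),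
        if_neg (fun h' => h ((adj0 x hx).2 (by omega)))]; ring
  rw [Finset.sum_congr rfl key]
  rw [Finset.sum_add_distrib, Finset.sum_add_distrib, Finset.sum_add_distrib,
    Finset.sum_add_distrib, Finset.sum_ite_eq' (range n) 1 f, Finset.sum_ite_eq' (range n) (p-1) f,
    Finset.sum_ite_eq' (range n) p f, Finset.sum_ite_eq' (range n) (p+q-2) f,
    if_pos (mem_range.2 (by omega)), if_pos (mem_range.2 (by omega)),
    if_pos (mem_range.2 (by omega)), if_pos (mem_range.2 (by omega))]
  ring

lemma sum_tail_zero {n c : ℕ} (f : ℕ → ℝ) (h : ∀ x, c ≤ x → x < n → f x = 0) :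
    (∑ x ∈ range n, if c ≤ x then f x else 0) = 0 := by
  refine Finset.sum_eq_zero fun x hx => ?_
  rw [mem_range] at hx
  by_cases hc : c ≤ x
  · rw [if_pos hc, h x hc hx]
  · rw [if_neg hc]

lemma sum_tail_single {n c t : ℕ} (f : ℕ → ℝ) (ht : c ≤ t) (htn : t < n)
    (h : ∀ x, c ≤ x → x < n → x ≠ t → f x = 0) :
    (∑ x ∈ range n, if c ≤ x then f x else 0) = f t := by
  rw [Finset.sum_eq_single t]
  · rw [if_pos ht]
  · intro b hb hbt
    rw [mem_range] at hb
    by_cases hc : c ≤ b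
    · rw [if_pos hc, h b hc hb hbt]
    · rw [if_neg hc]
  · intro hnot; exact absurd (mem_range.2 htn) hnot

lemma divg_sgraph {p q n : ℕ} (ψ : ℕ → ℝ) (v : Fin n) :
    divg (SGraph p q n) (fun u => ψ u.val) v
      = ∑ x ∈ range n, if AdjV p q v.val x then ψ v.val - ψ x else 0 := by
  rw [divg, ← Fin.sum_univ_eq_sum_range
    (fun x => if AdjV p q v.val x then ψ v.val - ψ x else 0) n]
  refine Finset.sum_congr rfl fun u _ => ?_
  by_cases h : (SGraph p q n).Adj v u
  · rw [if_pos h, if_pos (adj_val.1 h)]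
  · rw [if_neg h, if_neg (fun h' => h (adj_val.2 h'))]

end DRaux

namespace DRaux
attribute [local instance] Classical.propDecidable

lemma Psi_A_zero {p q T : ℕ} (hp : 3 ≤ p) (hT1 : 1 ≤ T) (hT2 : T ≤ p-1) :
    Psi p q T 0 = cy p T 0 := by
  rw [Psi_A hT1 hT2 0, if_pos (by omega)]

lemma Psi_A_const {p q T x : ℕ} (hT1 : 1 ≤ T) (hT2 : T ≤ p-1) (hx : p ≤ x) :
    Psi p q T x = cy p T 0 := by
  rw [Psi_A hT1 hT2 x, if_neg (by omega)]

lemma Psi_B_in {p q T x : ℕ} (hp : 3 ≤ p) (hT1 : p ≤ T) (hT2 : T ≤ p+q-2)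
    (hx1 : p ≤ x) (hx2 : x ≤ p+q-2) :
    Psi p q T x = cy q (T-p+1) (x-p+1) := by
  rw [Psi_B hp hT1 hT2 x, if_pos ⟨hx1, hx2⟩]

lemma Psi_B_out {p q T x : ℕ} (hp : 3 ≤ p) (hT1 : p ≤ T) (hT2 : T ≤ p+q-2)
    (hx : ¬ (p ≤ x ∧ x ≤ p+q-2)) :
    Psi p q T x = cy q (T-p+1) 0 := by
  rw [Psi_B hp hT1 hT2 x, if_neg hx]

lemma stepA_mid {p q T w : ℕ} (hp : 3 ≤ p) (h1 : 1 ≤ w) (h2 : w ≤ p-2)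
    (hT1 : 1 ≤ T) (hT2 : T ≤ p-1) :
    (Psi p q T w - Psi p q T (w-1)) + (Psi p q T w - Psi p q T (w+1))
      = if w = T then -1 else 0 := by
  rw [Psi_A hT1 hT2 w, Psi_A hT1 hT2 (w-1), Psi_A hT1 hT2 (w+1),
    if_pos (show w < p by omega), if_pos (show w-1 < p by omega),
    if_pos (show w+1 < p by omega)]
  by_cases hwT : w = T
  · subst hwT; rw [if_pos rfl]; exact cy_sink p w h1 (by omega)
  · rw [if_neg hwT]; exact cy_harm p T w h1 (by omega) hwT (by omega)

lemma stepA_end {p q T : ℕ} (hp : 3 ≤ p) (hT1 : 1 ≤ T) (hT2 : T ≤ p-1) :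
    (Psi p q T (p-1) - Psi p q T (p-2)) + (Psi p q T (p-1) - Psi p q T 0)
      = if p-1 = T then -1 else 0 := by
  rw [Psi_A hT1 hT2 (p-1), Psi_A hT1 hT2 (p-2), Psi_A hT1 hT2 0,
    if_pos (show p-1 < p by omega), if_pos (show p-2 < p by omega),
    if_pos (show 0 < p by omega)]
  have e0 : cy p T 0 = cy p T ((p-1)+1) := by
    rw [show p-1+1 = p from by omega, cy_wrap p T (by omega)]
  have e2 : p - 2 = (p-1) - 1 := by omega
  rw [e0, e2]
  by_cases hwT : p-1 = T
  · rw [if_pos hwT, ← hwT]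
    exact cy_sink p (p-1) (by omega) (by omega)
  · rw [if_neg hwT]
    exact cy_harm p T (p-1) (by omega) (by omega) hwT (by omega)

lemma srcA {p q T : ℕ} (hp : 3 ≤ p) (hT1 : 1 ≤ T) (hT2 : T ≤ p-1) :
    (Psi p q T 0 - Psi p q T 1) + (Psi p q T 0 - Psi p q T (p-1)) = 1 := by
  rw [Psi_A hT1 hT2 0, Psi_A hT1 hT2 1, Psi_A hT1 hT2 (p-1),
    if_pos (show 0 < p by omega), if_pos (show 1 < p by omega),
    if_pos (show p-1 < p by omega)]
  exact cy_source p T hT1 (by omega) (by omega)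

lemma stepB_first {p q T : ℕ} (hp : 3 ≤ p) (hq : 3 ≤ q) (hT1 : p ≤ T) (hT2 : T ≤ p+q-2) :
    (Psi p q T p - Psi p q T 0) + (Psi p q T p - Psi p q T (p+1))
      = if p = T then -1 else 0 := by
  rw [Psi_B_in hp hT1 hT2 le_rfl (by omega), Psi_B_out hp hT1 hT2 (by omega),
    Psi_B_in hp hT1 hT2 (by omega) (by omega),
    show p - p + 1 = 1 from by omega, show p + 1 - p + 1 = 2 from by omega]
  by_cases hwT : p = T
  · rw [if_pos hwT]
    have hk : T - p + 1 = 1 := by omega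
    rw [hk]
    have := cy_sink q 1 le_rfl (by omega)
    simpa using this
  · rw [if_neg hwT]
    have := cy_harm q (T-p+1) 1 le_rfl (by omega) (by omega) (by omega)
    simpa using this

lemma stepB_mid {p q T w : ℕ} (hp : 3 ≤ p) (hq : 3 ≤ q) (h1 : p+1 ≤ w) (h2 : w ≤ p+q-3)
    (hT1 : p ≤ T) (hT2 : T ≤ p+q-2) :
    (Psi p q T w - Psi p q T (w-1)) + (Psi p q T w - Psi p q T (w+1))
      = if w = T then -1 else 0 := by
  rw [Psi_B_in hp hT1 hT2 (by omega) (by omega),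
    Psi_B_in hp hT1 hT2 (by omega) (by omega),
    Psi_B_in hp hT1 hT2 (by omega) (by omega),
    show w - 1 - p + 1 = (w-p+1) - 1 from by omega,
    show w + 1 - p + 1 = (w-p+1) + 1 from by omega]
  by_cases hwT : w = T
  · rw [if_pos hwT]
    have hk : T - p + 1 = w - p + 1 := by omega
    rw [hk]
    exact cy_sink q (w-p+1) (by omega) (by omega)
  · rw [if_neg hwT]
    exact cy_harm q (T-p+1) (w-p+1) (by omega) (by omega) (by omega) (by omega)

lemma stepB_end {p q T : ℕ} (hp : 3 ≤ p) (hq : 3 ≤ q) (hT1 : p ≤ T) (hT2 : T ≤ p+q-2) :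
    (Psi p q T (p+q-2) - Psi p q T (p+q-3)) + (Psi p q T (p+q-2) - Psi p q T 0)
      = if p+q-2 = T then -1 else 0 := by
  rw [Psi_B_in hp hT1 hT2 (by omega) (by omega),
    Psi_B_in hp hT1 hT2 (by omega) (by omega),
    Psi_B_out hp hT1 hT2 (by omega),
    show p + q - 2 - p + 1 = q - 1 from by omega,
    show p + q - 3 - p + 1 = (q-1) - 1 from by omega]
  have e0 : cy q (T-p+1) 0 = cy q (T-p+1) ((q-1)+1) := by
    rw [show q-1+1 = q from by omega, cy_wrap q (T-p+1) (by omega)]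
  rw [e0]
  by_cases hwT : p+q-2 = T
  · rw [if_pos hwT]
    have hk : T - p + 1 = q - 1 := by omega
    rw [hk]
    exact cy_sink q (q-1) (by omega) (by omega)
  · rw [if_neg hwT]
    exact cy_harm q (T-p+1) (q-1) (by omega) (by omega) (by omega) (by omega)

lemma srcB {p q T : ℕ} (hp : 3 ≤ p) (hq : 3 ≤ q) (hT1 : p ≤ T) (hT2 : T ≤ p+q-2) :
    (Psi p q T 0 - Psi p q T p) + (Psi p q T 0 - Psi p q T (p+q-2)) = 1 := by
  rw [Psi_B_out hp hT1 hT2 (by omega),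
    Psi_B_in hp hT1 hT2 le_rfl (by omega),
    Psi_B_in hp hT1 hT2 (by omega) (by omega),
    show p - p + 1 = 1 from by omega,
    show p + q - 2 - p + 1 = q - 1 from by omega]
  exact cy_source q (T-p+1) (by omega) (by omega) (by omega)

end DRaux

namespace DRaux
attribute [local instance] Classical.propDecidable

lemma adjA {p q n w : ℕ} (hp : 3 ≤ p) (hq : 3 ≤ q) (hw1 : 1 ≤ w) (hw2 : w ≤ p - 2) :
    ∀ x, x < n → (AdjV p q w x ↔ x = w - 1 ∨ x = w + 1) := by
  intro x hx
  unfold AdjV RR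
  constructor
  · rintro ⟨hne, (h|h|h|h|h|h) | (h|h|h|h|h|h)⟩ <;> omega
  · rintro (h|h)
    · exact ⟨by omega, Or.inr (Or.inl ⟨by omega, by omega⟩)⟩
    · exact ⟨by omega, Or.inl (Or.inl ⟨by omega, by omega⟩)⟩

lemma adjAe {p q n : ℕ} (hp : 3 ≤ p) (hq : 3 ≤ q) :
    ∀ x, x < n → (AdjV p q (p-1) x ↔ x = p - 2 ∨ x = 0) := by
  intro x hx
  unfold AdjV RR
  constructor
  · rintro ⟨hne, (h|h|h|h|h|h) | (h|h|h|h|h|h)⟩ <;> omega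
  · rintro (h|h)
    · exact ⟨by omega, Or.inr (Or.inl ⟨by omega, by omega⟩)⟩
    · exact ⟨by omega, Or.inr (Or.inr (Or.inl ⟨by omega, by omega⟩))⟩

lemma adjB0 {p q n : ℕ} (hp : 3 ≤ p) (hq : 3 ≤ q) :
    ∀ x, x < n → (AdjV p q p x ↔ x = 0 ∨ x = p + 1) := by
  intro x hx
  unfold AdjV RR
  constructor
  · rintro ⟨hne, (h|h|h|h|h|h) | (h|h|h|h|h|h)⟩ <;> omega
  · rintro (h|h)
    · exact ⟨by omega, Or.inr (Or.inr (Or.inr (Or.inl ⟨by omega, by omega⟩)))⟩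
    · exact ⟨by omega, Or.inl (Or.inr (Or.inr (Or.inr (Or.inl ⟨by omega, by omega, by omega⟩))))⟩

lemma adjBmid {p q n w : ℕ} (hp : 3 ≤ p) (hq : 3 ≤ q) (hw1 : p + 1 ≤ w) (hw2 : w ≤ p + q - 3) :
    ∀ x, x < n → (AdjV p q w x ↔ x = w - 1 ∨ x = w + 1) := by
  intro x hx
  unfold AdjV RR
  constructor
  · rintro ⟨hne, (h|h|h|h|h|h) | (h|h|h|h|h|h)⟩ <;> omega
  · rintro (h|h)
    · exact ⟨by omega, Or.inr (Or.inr (Or.inr (Or.inr (Or.inl ⟨by omega, by omega, by omega⟩))))⟩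
    · exact ⟨by omega, Or.inl (Or.inr (Or.inr (Or.inr (Or.inl ⟨by omega, by omega, by omega⟩))))⟩

lemma adjBend {p q n : ℕ} (hp : 3 ≤ p) (hq : 3 ≤ q) :
    ∀ x, x < n → (AdjV p q (p+q-2) x ↔ x = p + q - 3 ∨ x = 0) := by
  intro x hx
  unfold AdjV RR
  constructor
  · rintro ⟨hne, (h|h|h|h|h|h) | (h|h|h|h|h|h)⟩ <;> omega
  · rintro (h|h)
    · exact ⟨by omega, Or.inr (Or.inr (Or.inr (Or.inr (Or.inl ⟨by omega, by omega, by omega⟩))))⟩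
    · exact ⟨by omega, Or.inr (Or.inr (Or.inr (Or.inr (Or.inr (Or.inl ⟨by omega, by omega⟩)))))⟩

lemma adjP {p q n w : ℕ} (hp : 3 ≤ p) (hq : 3 ≤ q) (hw : p + q - 1 ≤ w) :
    ∀ x, x < n → (AdjV p q w x ↔ x = 0) := by
  intro x hx
  unfold AdjV RR
  constructor
  · rintro ⟨hne, (h|h|h|h|h|h) | (h|h|h|h|h|h)⟩ <;> omega
  · rintro h
    exact ⟨by omega, Or.inr (Or.inr (Or.inr (Or.inr (Or.inr (Or.inr ⟨by omega, by omega⟩)))))⟩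

lemma div_Psi {p q n : ℕ} (hp : 3 ≤ p) (hq : 3 ≤ q) (hn : p + q - 1 ≤ n)
    (t v : Fin n) :
    divg (SGraph p q n) (fun u => Psi p q t.val u.val) v
      = (if v.val = 0 then 1 else 0) - (if v.val = t.val then 1 else 0) := by
  obtain ⟨T, htn⟩ := t
  obtain ⟨w, hwn⟩ := v
  rw [divg_sgraph (fun x => Psi p q T x) ⟨w, hwn⟩]
  simp only [Fin.val_mk]
  by_cases hT0 : T = 0
  · subst hT0
    simp [Psi_zero]
  have hT1 : 1 ≤ T := by omega
  -- the four t-classes as disjunction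
  by_cases hw0 : w = 0
  · -- v is the hub
    subst hw0
    rw [sum_ite_zero_vertex hp hq hn, if_pos rfl, if_neg (by omega)]
    by_cases hTA : T ≤ p - 1
    · rw [Psi_A_zero hp hT1 hTA, Psi_A_const (x := p) hT1 hTA (le_refl p),
        Psi_A_const (x := p+q-2) hT1 hTA (show p ≤ p+q-2 by omega),
        sum_tail_zero _ (fun x hx1 hx2 => by
          rw [Psi_A_const (x := x) hT1 hTA (by omega)]; ring)]
      have := srcA (q := q) hp hT1 hTA
      rw [Psi_A_zero hp hT1 hTA] at this
      linarith
    · by_cases hTB : T ≤ p + q - 2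
      · have hTp : p ≤ T := by omega
        rw [Psi_B_out (x := 0) hp hTp hTB (by omega),
          Psi_B_out (x := 1) hp hTp hTB (by omega),
          Psi_B_out (x := p-1) hp hTp hTB (by omega),
          sum_tail_zero _ (fun x hx1 hx2 => by
            rw [Psi_B_out (x := x) hp hTp hTB (by omega)]; ring)]
        have := srcB hp hq hTp hTB
        rw [Psi_B_out (x := 0) hp hTp hTB (by omega)] at this
        linarith
      · have hTP : p + q - 1 ≤ T := by omega
        rw [Psi_P hp hq hTP 0, Psi_P hp hq hTP 1, Psi_P hp hq hTP (p-1),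
          Psi_P hp hq hTP p, Psi_P hp hq hTP (p+q-2),
          if_neg (show ¬ (0:ℕ) = T by omega), if_neg (show ¬ (1:ℕ) = T by omega),
          if_neg (show ¬ p-1 = T by omega), if_neg (show ¬ p = T by omega),
          if_neg (show ¬ p+q-2 = T by omega),
          sum_tail_single _ hTP htn (fun x hx1 hx2 hxT => by
            rw [Psi_P hp hq hTP x, if_neg hxT]; ring)]
        rw [Psi_P hp hq hTP T, if_pos rfl]
        ring
  · by_cases hwA1 : w ≤ p - 2
    · -- v inside cycle p, not p-1
      have hw1 : 1 ≤ w := by omega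
      rw [sum_ite_two (fun x => AdjV p q w x) (fun x => Psi p q T w - Psi p q T x)
        (show w-1 < n by omega) (show w+1 < n by omega) (by omega)
        (adjA hp hq hw1 hwA1)]
      rw [if_neg hw0]
      by_cases hTA : T ≤ p - 1
      · rw [stepA_mid hp hw1 hwA1 hT1 hTA]
        by_cases hwT : w = T
        · rw [if_pos hwT, if_pos hwT]; ring
        · rw [if_neg hwT, if_neg hwT]; ring
      · by_cases hTB : T ≤ p + q - 2
        · have hTp : p ≤ T := by omega
          rw [Psi_B_out hp hTp hTB (by omega), Psi_B_out hp hTp hTB (by omega),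
            Psi_B_out hp hTp hTB (by omega), if_neg (by omega)]
          ring
        · have hTP : p + q - 1 ≤ T := by omega
          rw [Psi_P hp hq hTP w, Psi_P hp hq hTP (w-1), Psi_P hp hq hTP (w+1),
            if_neg (by omega), if_neg (by omega), if_neg (by omega), if_neg (by omega)]
          ring
    · by_cases hwA2 : w = p - 1
      · subst hwA2
        rw [sum_ite_two (fun x => AdjV p q (p-1) x) (fun x => Psi p q T (p-1) - Psi p q T x)
          (show p-2 < n by omega) (show (0:ℕ) < n by omega) (by omega)
          (adjAe hp hq)]
        rw [if_neg hw0]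
        by_cases hTA : T ≤ p - 1
        · rw [stepA_end hp hT1 hTA]
          by_cases hwT : p-1 = T
          · rw [if_pos hwT, if_pos hwT]; ring
          · rw [if_neg hwT, if_neg hwT]; ring
        · by_cases hTB : T ≤ p + q - 2
          · have hTp : p ≤ T := by omega
            rw [Psi_B_out hp hTp hTB (by omega), Psi_B_out hp hTp hTB (by omega),
              Psi_B_out hp hTp hTB (by omega), if_neg (by omega)]
            ring
          · have hTP : p + q - 1 ≤ T := by omega
            rw [Psi_P hp hq hTP (p-1), Psi_P hp hq hTP (p-2), Psi_P hp hq hTP 0,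
              if_neg (by omega), if_neg (by omega), if_neg (by omega), if_neg (by omega)]
            ring
      · by_cases hwB0 : w = p
        · simp only [hwB0]
          rw [sum_ite_two (fun x => AdjV p q p x) (fun x => Psi p q T p - Psi p q T x)
            (show (0:ℕ) < n by omega) (show p+1 < n by omega) (by omega)
            (adjB0 hp hq)]
          rw [if_neg (show ¬ p = 0 by omega)]
          by_cases hTA : T ≤ p - 1
          · rw [Psi_A_const hT1 hTA (le_refl p), Psi_A_zero hp hT1 hTA,
              Psi_A_const hT1 hTA (by omega), if_neg (by omega)]
            ring
          · by_cases hTB : T ≤ p + q - 2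
            · have hTp : p ≤ T := by omega
              rw [stepB_first hp hq hTp hTB]
              by_cases hwT : p = T
              · rw [if_pos hwT, if_pos hwT]; ring
              · rw [if_neg hwT, if_neg hwT]; ring
            · have hTP : p + q - 1 ≤ T := by omega
              rw [Psi_P hp hq hTP p, Psi_P hp hq hTP 0, Psi_P hp hq hTP (p+1),
                if_neg (by omega), if_neg (by omega), if_neg (by omega), if_neg (by omega)]
              ring
        · by_cases hwB : w ≤ p + q - 3
          · have hwp1 : p + 1 ≤ w := by omega
            rw [sum_ite_two (fun x => AdjV p q w x) (fun x => Psi p q T w - Psi p q T x)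
              (show w-1 < n by omega) (show w+1 < n by omega) (by omega)
              (adjBmid hp hq hwp1 hwB)]
            rw [if_neg hw0]
            by_cases hTA : T ≤ p - 1
            · rw [Psi_A_const hT1 hTA (by omega), Psi_A_const hT1 hTA (by omega),
                Psi_A_const hT1 hTA (by omega), if_neg (by omega)]
              ring
            · by_cases hTB : T ≤ p + q - 2
              · have hTp : p ≤ T := by omega
                rw [stepB_mid hp hq hwp1 hwB hTp hTB]
                by_cases hwT : w = T
                · rw [if_pos hwT, if_pos hwT]; ring
                · rw [if_neg hwT, if_neg hwT]; ring
              · have hTP : p + q - 1 ≤ T := by omega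
                rw [Psi_P hp hq hTP w, Psi_P hp hq hTP (w-1), Psi_P hp hq hTP (w+1),
                  if_neg (by omega), if_neg (by omega), if_neg (by omega), if_neg (by omega)]
                ring
          · by_cases hwB2 : w = p + q - 2
            · subst hwB2
              rw [sum_ite_two (fun x => AdjV p q (p+q-2) x) (fun x => Psi p q T (p+q-2) - Psi p q T x)
                (show p+q-3 < n by omega) (show (0:ℕ) < n by omega)
                (by omega) (adjBend hp hq)]
              rw [if_neg hw0]
              by_cases hTA : T ≤ p - 1
              · rw [Psi_A_const hT1 hTA (by omega), Psi_A_const hT1 hTA (by omega),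
                  Psi_A_zero hp hT1 hTA, if_neg (by omega)]
                ring
              · by_cases hTB : T ≤ p + q - 2
                · have hTp : p ≤ T := by omega
                  rw [stepB_end hp hq hTp hTB]
                  by_cases hwT : p+q-2 = T
                  · rw [if_pos hwT, if_pos hwT]; ring
                  · rw [if_neg hwT, if_neg hwT]; ring
                · have hTP : p + q - 1 ≤ T := by omega
                  rw [Psi_P hp hq hTP (p+q-2), Psi_P hp hq hTP (p+q-3), Psi_P hp hq hTP 0,
                    if_neg (by omega), if_neg (by omega), if_neg (by omega), if_neg (by omega)]
                  ring
            · -- pendant vertex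
              have hwP : p + q - 1 ≤ w := by omega
              rw [sum_ite_one (fun x => AdjV p q w x) (fun x => Psi p q T w - Psi p q T x)
                (show (0:ℕ) < n by omega)
                (adjP hp hq hwP)]
              rw [if_neg hw0]
              by_cases hTA : T ≤ p - 1
              · rw [Psi_A_const hT1 hTA (by omega), Psi_A_zero hp hT1 hTA, if_neg (by omega)]
                ring
              · by_cases hTB : T ≤ p + q - 2
                · have hTp : p ≤ T := by omega
                  rw [Psi_B_out hp hTp hTB (by omega), Psi_B_out hp hTp hTB (by omega),
                    if_neg (by omega)]
                  ring
                · have hTP : p + q - 1 ≤ T := by omega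
                  rw [Psi_P hp hq hTP 0, if_neg (show ¬ (0:ℕ) = T by omega),
                    Psi_P hp hq hTP w]
                  by_cases hwT : w = T
                  · simp [hwT]
                  · rw [if_neg hwT, if_neg hwT]; ring

end DRaux



namespace DRaux
attribute [local instance] Classical.propDecidable

lemma divg_sub {V : Type*} [Fintype V] (G : SimpleGraph V) (φ1 φ2 : V → ℝ) (v : V) :
    divg G (fun x => φ1 x - φ2 x) v = divg G φ1 v - divg G φ2 v := by
  unfold divg
  rw [← Finset.sum_sub_distrib]
  refine Finset.sum_congr rfl fun u _ => ?_
  by_cases h : G.Adj v u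
  · rw [if_pos h, if_pos h, if_pos h]; ring
  · rw [if_neg h, if_neg h, if_neg h]; ring

lemma Psi_diag {p q t : ℕ} (hp : 3 ≤ p) (hq : 3 ≤ q) : Psi p q t t = 0 := by
  by_cases h0 : t = 0
  · subst h0; exact Psi_zero p q 0
  by_cases hA : t ≤ p - 1
  · rw [Psi_A (by omega) hA t, if_pos (by omega), cy_of_le le_rfl]; ring
  by_cases hB : t ≤ p + q - 2
  · rw [Psi_B_in hp (by omega) hB (by omega) hB, cy_of_le le_rfl]; ring
  · rw [Psi_P hp hq (by omega) t, if_pos rfl]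

lemma eRes_SGraph {p q n : ℕ} (hp : 3 ≤ p) (hq : 3 ≤ q) (hn : p + q - 1 ≤ n)
    (u v : Fin n) :
    eRes (SGraph p q n) u v = Psi p q v.val u.val + Psi p q u.val v.val := by
  by_cases huv : u = v
  · subst huv
    rw [eRes_self, Psi_diag hp hq]; ring
  · have key := eRes_eq_potential (SGraph p q n)
      (fun w => Psi p q v.val w.val - Psi p q u.val w.val) u v huv
      (fun w hwu hwv => by
        rw [divg_sub, div_Psi hp hq hn v w, div_Psi hp hq hn u w,
          if_neg (fun h => hwv (Fin.ext h)), if_neg (fun h => hwu (Fin.ext h))]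
        ring)
      (by
        rw [divg_sub, div_Psi hp hq hn v u, div_Psi hp hq hn u u,
          if_neg (fun h => huv (Fin.ext h)), if_pos rfl]
        ring)
    rw [key]
    simp only [Psi_diag hp hq]
    ring

lemma sum_tail_count {n c : ℕ} (hc : c ≤ n) :
    (∑ x ∈ range n, if c ≤ x then (1:ℝ) else 0) = ((n - c : ℕ) : ℝ) := by
  have : (∑ x ∈ range n, if c ≤ x then (1:ℝ) else 0)
      = ((range n).filter (fun x => c ≤ x)).card := by
    rw [Finset.sum_boole]
  rw [this, show (range n).filter (fun x => c ≤ x) = Finset.Ico c n by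
    ext x; simp [Finset.mem_Ico]; omega, Nat.card_Ico]

lemma vdeg_val {p q n : ℕ} (hp : 3 ≤ p) (hq : 3 ≤ q) (hn : p + q - 1 ≤ n) (v : Fin n) :
    (vdeg (SGraph p q n) v : ℝ)
      = if v.val = 0 then (n:ℝ) - ((p:ℝ) + q - 1) + 4
        else if v.val ≤ p+q-2 then 2 else 1 := by
  have h0 : vdeg (SGraph p q n) v = ∑ u : Fin n, if (SGraph p q n).Adj v u then 1 else 0 := by
    rw [vdeg, show (SGraph p q n).neighborSet v = {w | (SGraph p q n).Adj v w} from rfl,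
      Nat.card_coe_set_eq, Set.ncard_eq_toFinset_card', Set.toFinset_setOf,
      Finset.card_filter]
  have h1 : (vdeg (SGraph p q n) v : ℝ)
      = ∑ x ∈ range n, (if AdjV p q v.val x then (1:ℝ) else 0) := by
    rw [h0, Nat.cast_sum,
      ← Fin.sum_univ_eq_sum_range (fun x => if AdjV p q v.val x then (1:ℝ) else 0) n]
    refine Finset.sum_congr rfl fun u _ => ?_
    by_cases h : (SGraph p q n).Adj v u
    · rw [if_pos h, if_pos (adj_val.1 h)]; norm_num
    · rw [if_neg h, if_neg (fun h' => h (adj_val.2 h'))]; norm_num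
  rw [h1]
  obtain ⟨w, hwn⟩ := v
  simp only [Fin.val_mk]
  by_cases hw0 : w = 0
  · subst hw0
    rw [sum_ite_zero_vertex hp hq hn, sum_tail_count (by omega), if_pos rfl]
    have hc : ((n - (p + q - 1) : ℕ) : ℝ) = (n:ℝ) - ((p:ℝ) + q - 1) := by
      push_cast [hn, show 1 ≤ p + q by omega]
      ring
    rw [hc]; ring
  · by_cases hwA1 : w ≤ p - 2
    · rw [sum_ite_two (fun x => AdjV p q w x) (fun _ => (1:ℝ))
        (show w-1 < n by omega) (show w+1 < n by omega) (by omega)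
        (adjA hp hq (by omega) hwA1), if_neg hw0, if_pos (by omega)]
      norm_num
    · by_cases hwA2 : w = p - 1
      · subst hwA2
        rw [sum_ite_two (fun x => AdjV p q (p-1) x) (fun _ => (1:ℝ))
          (show p-2 < n by omega) (show (0:ℕ) < n by omega) (by omega)
          (adjAe hp hq), if_neg hw0, if_pos (by omega)]
        norm_num
      · by_cases hwB0 : w = p
        · simp only [hwB0]
          rw [sum_ite_two (fun x => AdjV p q p x) (fun _ => (1:ℝ))
            (show (0:ℕ) < n by omega) (show p+1 < n by omega) (by omega)
            (adjB0 hp hq), if_neg (by omega), if_pos (by omega)]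
          norm_num
        · by_cases hwB : w ≤ p + q - 3
          · rw [sum_ite_two (fun x => AdjV p q w x) (fun _ => (1:ℝ))
              (show w-1 < n by omega) (show w+1 < n by omega) (by omega)
              (adjBmid hp hq (by omega) hwB), if_neg hw0, if_pos (by omega)]
            norm_num
          · by_cases hwB2 : w = p + q - 2
            · subst hwB2
              rw [sum_ite_two (fun x => AdjV p q (p+q-2) x) (fun _ => (1:ℝ))
                (show p+q-3 < n by omega) (show (0:ℕ) < n by omega) (by omega)
                (adjBend hp hq), if_neg hw0, if_pos (by omega)]
              norm_num
            · rw [sum_ite_one (fun x => AdjV p q w x) (fun _ => (1:ℝ))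
                (show (0:ℕ) < n by omega) (adjP hp hq (by omega)),
                if_neg hw0, if_neg (by omega)]

end DRaux


namespace DRaux
attribute [local instance] Classical.propDecidable

noncomputable def Dv (p q n x : ℕ) : ℝ :=
  if x = 0 then (n:ℝ) - ((p:ℝ) + q - 1) + 4 else if x ≤ p+q-2 then 2 else 1

lemma vdeg_Dv {p q n : ℕ} (hp : 3 ≤ p) (hq : 3 ≤ q) (hn : p + q - 1 ≤ n) (v : Fin n) :
    (vdeg (SGraph p q n) v : ℝ) = Dv p q n v.val := vdeg_val hp hq hn v

lemma sum_id_real (m : ℕ) : ∑ x ∈ range m, (x:ℝ) = (m:ℝ) * ((m:ℝ)-1) / 2 := by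
  induction m with
  | zero => simp
  | succ k ih => rw [Finset.sum_range_succ, ih]; push_cast; ring

lemma sum_sq_real (m : ℕ) :
    ∑ x ∈ range m, (x:ℝ)^2 = (m:ℝ) * ((m:ℝ)-1) * (2*(m:ℝ)-1) / 6 := by
  induction m with
  | zero => simp
  | succ k ih => rw [Finset.sum_range_succ, ih]; push_cast; ring

lemma sum_tq (m : ℕ) :
    ∑ t ∈ range m, (t:ℝ) * ((m:ℝ) - t) = (m:ℝ)*((m:ℝ)-1)*((m:ℝ)+1)/6 := by
  have h : ∀ t ∈ range m, (t:ℝ)*((m:ℝ)-t) = (m:ℝ)*(t:ℝ) - (t:ℝ)^2 := fun t _ => by ring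
  rw [Finset.sum_congr rfl h, Finset.sum_sub_distrib, ← Finset.mul_sum, sum_id_real,
    sum_sq_real]
  ring

lemma cy_sum {L k : ℕ} (hk : k < L) :
    ∑ x ∈ range L, cy L k x = (k:ℝ) * ((L:ℝ) - k) / 2 := by
  have hL : (L:ℝ) ≠ 0 := Nat.cast_ne_zero.2 (by omega)
  rw [← Finset.sum_range_add_sum_Ico _ (show k+1 ≤ L by omega)]
  have e1 : ∑ x ∈ range (k+1), cy L k x
      = ((k:ℝ)+1) * ((k:ℝ)*(((L:ℝ)-k)/L)) - (((k:ℝ)+1)*(k:ℝ)/2) * (((L:ℝ)-k)/L) := by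
    have step : ∀ x ∈ range (k+1), cy L k x
        = (k:ℝ)*(((L:ℝ)-k)/L) - (x:ℝ) * (((L:ℝ)-k)/L) := by
      intro x hx
      rw [cy_of_le (by rw [mem_range] at hx; omega)]; ring
    rw [Finset.sum_congr rfl step, Finset.sum_sub_distrib, Finset.sum_const,
      ← Finset.sum_mul, sum_id_real, nsmul_eq_mul, Finset.card_range]
    push_cast
    ring
  have e2 : ∑ x ∈ Ico (k+1) L, cy L k x
      = (((L:ℝ)-(k:ℝ)-1)*(((L:ℝ)-(k:ℝ)-1)-1)/2 + ((L:ℝ)-(k:ℝ)-1)) * ((k:ℝ)/L) := by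
    rw [Finset.sum_Ico_eq_sum_range]
    have step : ∀ j ∈ range (L - (k+1)), cy L k (k+1+j) = ((j:ℝ)+1)*((k:ℝ)/L) := by
      intro j _
      rw [cy_of_ge (by omega)]; push_cast; ring
    have hM : ((L - (k+1) : ℕ):ℝ) = (L:ℝ) - (k:ℝ) - 1 := by
      push_cast [show k+1 ≤ L from by omega]; ring
    rw [Finset.sum_congr rfl step, ← Finset.sum_mul, Finset.sum_add_distrib,
      sum_id_real, Finset.sum_const, nsmul_eq_mul, mul_one, Finset.card_range, hM]
  rw [e1, e2]
  field_simp
  ring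

lemma split3 {n p w : ℕ} (h1 : p ≤ w) (h2 : w ≤ n) (f : ℕ → ℝ) :
    ∑ x ∈ range n, f x
      = ∑ x ∈ range p, f x + ∑ x ∈ Ico p w, f x + ∑ x ∈ Ico w n, f x := by
  rw [range_eq_Ico, ← Finset.sum_Ico_consecutive f (Nat.zero_le w) h2,
    ← Finset.sum_Ico_consecutive f (Nat.zero_le p) h1, ← range_eq_Ico]

lemma peel {m : ℕ} (hm : 1 ≤ m) (f : ℕ → ℝ) :
    ∑ j ∈ range (m-1), f (j+1) = ∑ t ∈ range m, f t - f 0 := by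
  have h := Finset.sum_range_succ' f (m-1)
  rw [show m-1+1 = m from by omega] at h
  rw [h]; ring

lemma midsum {p q : ℕ} (hq : 1 ≤ q) (f : ℕ → ℝ) :
    ∑ x ∈ Ico p (p+q-1), f x = ∑ j ∈ range (q-1), f (p+j) := by
  rw [Finset.sum_Ico_eq_sum_range, show p+q-1-p = q-1 from by omega]

end DRaux


namespace DRaux
attribute [local instance] Classical.propDecidable

lemma sum_psiA_cycle {p q t : ℕ} (h1 : 1 ≤ t) (h2 : t ≤ p - 1) (hp : 3 ≤ p) :
    ∑ x ∈ range p, Psi p q t x = (t:ℝ)*((p:ℝ)-t)/2 := by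
  have step : ∀ x ∈ range p, Psi p q t x = cy p t x := fun x hx => by
    rw [Psi_A h1 h2 x, if_pos (mem_range.1 hx)]
  rw [Finset.sum_congr rfl step, cy_sum (show t < p by omega)]

lemma cast_q1 {q : ℕ} (hq : 3 ≤ q) : ((q-1:ℕ):ℝ) = (q:ℝ)-1 := by
  push_cast [show 1 ≤ q by omega]; ring

lemma cast_tail {p q n : ℕ} (hp : 3 ≤ p) (hq : 3 ≤ q) (hn : p + q - 1 ≤ n) :
    ((n-(p+q-1):ℕ):ℝ) = (n:ℝ)-((p:ℝ)+(q:ℝ)-1) := by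
  push_cast [hn, show 1 ≤ p+q by omega]; ring

lemma U_A {p q n t : ℕ} (hp : 3 ≤ p) (hq : 3 ≤ q) (hn : p + q - 1 ≤ n)
    (h1 : 1 ≤ t) (h2 : t ≤ p - 1) :
    ∑ x ∈ range n, Psi p q t x
      = (t:ℝ)*((p:ℝ)-t)/2 + ((n:ℝ)-(p:ℝ)) * ((t:ℝ)*((p:ℝ)-t)/p) := by
  rw [split3 (show p ≤ p+q-1 by omega) hn]
  have e2 : ∑ x ∈ Ico p (p+q-1), Psi p q t x = ((q:ℝ)-1) * ((t:ℝ)*((p:ℝ)-t)/p) := by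
    have step : ∀ x ∈ Ico p (p+q-1), Psi p q t x = (t:ℝ)*((p:ℝ)-t)/p := fun x hx => by
      rw [Psi_A_const h1 h2 (mem_Ico.1 hx).1, cy_zero]
    rw [Finset.sum_congr rfl step, Finset.sum_const, Nat.card_Ico, nsmul_eq_mul,
      show p+q-1-p = q-1 from by omega, cast_q1 hq]
  have e3 : ∑ x ∈ Ico (p+q-1) n, Psi p q t x
      = ((n:ℝ)-((p:ℝ)+(q:ℝ)-1)) * ((t:ℝ)*((p:ℝ)-t)/p) := by
    have step : ∀ x ∈ Ico (p+q-1) n, Psi p q t x = (t:ℝ)*((p:ℝ)-t)/p := fun x hx => by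
      rw [Psi_A_const h1 h2 (by have := (mem_Ico.1 hx).1; omega), cy_zero]
    rw [Finset.sum_congr rfl step, Finset.sum_const, Nat.card_Ico, nsmul_eq_mul,
      cast_tail hp hq hn]
  rw [sum_psiA_cycle h1 h2 hp, e2, e3]; ring

lemma W_A {p q n t : ℕ} (hp : 3 ≤ p) (hq : 3 ≤ q) (hn : p + q - 1 ≤ n)
    (h1 : 1 ≤ t) (h2 : t ≤ p - 1) :
    ∑ x ∈ range n, Dv p q n x * Psi p q t x
      = (t:ℝ)*((p:ℝ)-t) + (2*(n:ℝ)-2*(p:ℝ)+2) * ((t:ℝ)*((p:ℝ)-t)/p) := by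
  rw [split3 (show p ≤ p+q-1 by omega) hn]
  have e1 : ∑ x ∈ range p, Dv p q n x * Psi p q t x
      = (t:ℝ)*((p:ℝ)-t) + ((n:ℝ)-((p:ℝ)+(q:ℝ)-1)+2) * ((t:ℝ)*((p:ℝ)-t)/p) := by
    have step : ∀ x ∈ range p, Dv p q n x * Psi p q t x
        = 2 * Psi p q t x
          + (if x = 0 then ((n:ℝ)-((p:ℝ)+(q:ℝ)-1)+2) * ((t:ℝ)*((p:ℝ)-t)/p) else 0) := by
      intro x hx; rw [mem_range] at hx
      by_cases hx0 : x = 0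
      · subst hx0
        rw [if_pos rfl, Psi_A_zero hp h1 h2, cy_zero]
        unfold Dv
        rw [if_pos rfl]
        push_cast
        ring
      · unfold Dv
        rw [if_neg hx0, if_pos (by omega), if_neg hx0, add_zero]
    rw [Finset.sum_congr rfl step, Finset.sum_add_distrib, ← Finset.mul_sum,
      sum_psiA_cycle h1 h2 hp,
      Finset.sum_ite_eq' (range p) 0
        (fun _ => ((n:ℝ)-((p:ℝ)+(q:ℝ)-1)+2) * ((t:ℝ)*((p:ℝ)-t)/p)),
      if_pos (mem_range.2 (by omega))]
    ring
  have e2 : ∑ x ∈ Ico p (p+q-1), Dv p q n x * Psi p q t x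
      = ((q:ℝ)-1) * (2 * ((t:ℝ)*((p:ℝ)-t)/p)) := by
    have step : ∀ x ∈ Ico p (p+q-1), Dv p q n x * Psi p q t x
        = 2 * ((t:ℝ)*((p:ℝ)-t)/p) := by
      intro x hx; rw [mem_Ico] at hx
      rw [Psi_A_const h1 h2 hx.1, cy_zero]
      unfold Dv
      rw [if_neg (by omega), if_pos (by omega)]
    rw [Finset.sum_congr rfl step, Finset.sum_const, Nat.card_Ico, nsmul_eq_mul,
      show p+q-1-p = q-1 from by omega, cast_q1 hq]
  have e3 : ∑ x ∈ Ico (p+q-1) n, Dv p q n x * Psi p q t x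
      = ((n:ℝ)-((p:ℝ)+(q:ℝ)-1)) * ((t:ℝ)*((p:ℝ)-t)/p) := by
    have step : ∀ x ∈ Ico (p+q-1) n, Dv p q n x * Psi p q t x
        = (t:ℝ)*((p:ℝ)-t)/p := by
      intro x hx; rw [mem_Ico] at hx
      rw [Psi_A_const h1 h2 (by omega), cy_zero]
      unfold Dv
      rw [if_neg (by omega), if_neg (by omega)]
      ring
    rw [Finset.sum_congr rfl step, Finset.sum_const, Nat.card_Ico, nsmul_eq_mul,
      cast_tail hp hq hn]
  rw [e1, e2, e3]; ring

lemma sum_psiB_cycle {p q t : ℕ} (hp : 3 ≤ p) (hq : 3 ≤ q)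
    (h1 : p ≤ t) (h2 : t ≤ p + q - 2) :
    ∑ x ∈ Ico p (p+q-1), Psi p q t x
      = ((t-p+1:ℕ):ℝ)*((q:ℝ)-((t-p+1:ℕ):ℝ))/2
        - ((t-p+1:ℕ):ℝ)*((q:ℝ)-((t-p+1:ℕ):ℝ))/q := by
  rw [midsum (show 1 ≤ q by omega)]
  have step : ∀ j ∈ range (q-1), Psi p q t (p+j) = cy q (t-p+1) (j+1) := by
    intro j hj; rw [mem_range] at hj
    rw [Psi_B_in hp h1 h2 (by omega) (by omega), show p+j-p+1 = j+1 from by omega]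
  rw [Finset.sum_congr rfl step, peel (show 1 ≤ q by omega) (cy q (t-p+1)),
    cy_sum (show t-p+1 < q by omega), cy_zero]

lemma U_B {p q n t : ℕ} (hp : 3 ≤ p) (hq : 3 ≤ q) (hn : p + q - 1 ≤ n)
    (h1 : p ≤ t) (h2 : t ≤ p + q - 2) :
    ∑ x ∈ range n, Psi p q t x
      = ((t-p+1:ℕ):ℝ)*((q:ℝ)-((t-p+1:ℕ):ℝ))/2
        + ((n:ℝ)-(q:ℝ)) * (((t-p+1:ℕ):ℝ)*((q:ℝ)-((t-p+1:ℕ):ℝ))/q) := by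
  rw [split3 (show p ≤ p+q-1 by omega) hn]
  have e1 : ∑ x ∈ range p, Psi p q t x
      = (p:ℝ) * (((t-p+1:ℕ):ℝ)*((q:ℝ)-((t-p+1:ℕ):ℝ))/q) := by
    have step : ∀ x ∈ range p, Psi p q t x
        = ((t-p+1:ℕ):ℝ)*((q:ℝ)-((t-p+1:ℕ):ℝ))/q := by
      intro x hx; rw [mem_range] at hx
      rw [Psi_B_out hp h1 h2 (by omega), cy_zero]
    rw [Finset.sum_congr rfl step, Finset.sum_const, Finset.card_range, nsmul_eq_mul]
  have e3 : ∑ x ∈ Ico (p+q-1) n, Psi p q t x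
      = ((n:ℝ)-((p:ℝ)+(q:ℝ)-1)) * (((t-p+1:ℕ):ℝ)*((q:ℝ)-((t-p+1:ℕ):ℝ))/q) := by
    have step : ∀ x ∈ Ico (p+q-1) n, Psi p q t x
        = ((t-p+1:ℕ):ℝ)*((q:ℝ)-((t-p+1:ℕ):ℝ))/q := by
      intro x hx; rw [mem_Ico] at hx
      rw [Psi_B_out hp h1 h2 (by omega), cy_zero]
    rw [Finset.sum_congr rfl step, Finset.sum_const, Nat.card_Ico, nsmul_eq_mul,
      cast_tail hp hq hn]
  rw [e1, sum_psiB_cycle hp hq h1 h2, e3]; ring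

lemma W_B {p q n t : ℕ} (hp : 3 ≤ p) (hq : 3 ≤ q) (hn : p + q - 1 ≤ n)
    (h1 : p ≤ t) (h2 : t ≤ p + q - 2) :
    ∑ x ∈ range n, Dv p q n x * Psi p q t x
      = ((t-p+1:ℕ):ℝ)*((q:ℝ)-((t-p+1:ℕ):ℝ))
        + (2*(n:ℝ)-2*(q:ℝ)+2) * (((t-p+1:ℕ):ℝ)*((q:ℝ)-((t-p+1:ℕ):ℝ))/q) := by
  rw [split3 (show p ≤ p+q-1 by omega) hn]
  have e1 : ∑ x ∈ range p, Dv p q n x * Psi p q t x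
      = (2*(p:ℝ) + ((n:ℝ)-((p:ℝ)+(q:ℝ)-1)+2))
        * (((t-p+1:ℕ):ℝ)*((q:ℝ)-((t-p+1:ℕ):ℝ))/q) := by
    have step : ∀ x ∈ range p, Dv p q n x * Psi p q t x
        = 2 * (((t-p+1:ℕ):ℝ)*((q:ℝ)-((t-p+1:ℕ):ℝ))/q)
          + (if x = 0 then
              ((n:ℝ)-((p:ℝ)+(q:ℝ)-1)+2) * (((t-p+1:ℕ):ℝ)*((q:ℝ)-((t-p+1:ℕ):ℝ))/q)
            else 0) := by
      intro x hx; rw [mem_range] at hx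
      rw [Psi_B_out hp h1 h2 (by omega), cy_zero]
      by_cases hx0 : x = 0
      · rw [if_pos hx0]
        unfold Dv
        rw [if_pos hx0]
        push_cast
        ring
      · rw [if_neg hx0, add_zero]
        unfold Dv
        rw [if_neg hx0, if_pos (by omega)]
    rw [Finset.sum_congr rfl step, Finset.sum_add_distrib, Finset.sum_const,
      Finset.card_range, nsmul_eq_mul,
      Finset.sum_ite_eq' (range p) 0
        (fun _ => ((n:ℝ)-((p:ℝ)+(q:ℝ)-1)+2)
          * (((t-p+1:ℕ):ℝ)*((q:ℝ)-((t-p+1:ℕ):ℝ))/q)),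
      if_pos (mem_range.2 (by omega))]
    ring
  have e2 : ∑ x ∈ Ico p (p+q-1), Dv p q n x * Psi p q t x
      = 2 * (((t-p+1:ℕ):ℝ)*((q:ℝ)-((t-p+1:ℕ):ℝ))/2
          - ((t-p+1:ℕ):ℝ)*((q:ℝ)-((t-p+1:ℕ):ℝ))/q) := by
    have step : ∀ x ∈ Ico p (p+q-1), Dv p q n x * Psi p q t x = 2 * Psi p q t x := by
      intro x hx; rw [mem_Ico] at hx
      unfold Dv
      rw [if_neg (by omega), if_pos (by omega)]
    rw [Finset.sum_congr rfl step, ← Finset.mul_sum, sum_psiB_cycle hp hq h1 h2]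
  have e3 : ∑ x ∈ Ico (p+q-1) n, Dv p q n x * Psi p q t x
      = ((n:ℝ)-((p:ℝ)+(q:ℝ)-1)) * (((t-p+1:ℕ):ℝ)*((q:ℝ)-((t-p+1:ℕ):ℝ))/q) := by
    have step : ∀ x ∈ Ico (p+q-1) n, Dv p q n x * Psi p q t x
        = ((t-p+1:ℕ):ℝ)*((q:ℝ)-((t-p+1:ℕ):ℝ))/q := by
      intro x hx; rw [mem_Ico] at hx
      rw [Psi_B_out hp h1 h2 (by omega), cy_zero]
      unfold Dv
      rw [if_neg (by omega), if_neg (by omega)]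
      ring
    rw [Finset.sum_congr rfl step, Finset.sum_const, Nat.card_Ico, nsmul_eq_mul,
      cast_tail hp hq hn]
  rw [e1, e2, e3]; ring

lemma U_P {p q n t : ℕ} (hp : 3 ≤ p) (hq : 3 ≤ q)
    (h1 : p + q - 1 ≤ t) (h2 : t < n) :
    ∑ x ∈ range n, Psi p q t x = (n:ℝ) - 1 := by
  have step : ∀ x ∈ range n, Psi p q t x = 1 - (if x = t then (1:ℝ) else 0) := by
    intro x _; rw [Psi_P hp hq h1 x]
    by_cases hxt : x = t
    · rw [if_pos hxt, if_pos hxt]; ring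
    · rw [if_neg hxt, if_neg hxt]; ring
  rw [Finset.sum_congr rfl step, Finset.sum_sub_distrib, Finset.sum_const,
    Finset.sum_ite_eq' (range n) t (fun _ => (1:ℝ)), if_pos (mem_range.2 h2),
    nsmul_eq_mul, mul_one, Finset.card_range]

lemma SD {p q n : ℕ} (hp : 3 ≤ p) (hq : 3 ≤ q) (hn : p + q - 1 ≤ n) :
    ∑ x ∈ range n, Dv p q n x = 2*(n:ℝ)+2 := by
  rw [split3 (show p ≤ p+q-1 by omega) hn]
  have e1 : ∑ x ∈ range p, Dv p q n x
      = 2*(p:ℝ) + ((n:ℝ)-((p:ℝ)+(q:ℝ)-1)+2) := by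
    have step : ∀ x ∈ range p, Dv p q n x
        = 2 + (if x = 0 then ((n:ℝ)-((p:ℝ)+(q:ℝ)-1)+2) else 0) := by
      intro x hx; rw [mem_range] at hx
      unfold Dv
      by_cases hx0 : x = 0
      · rw [if_pos hx0, if_pos hx0]; push_cast; ring
      · rw [if_neg hx0, if_neg hx0, if_pos (by omega), add_zero]
    rw [Finset.sum_congr rfl step, Finset.sum_add_distrib, Finset.sum_const,
      Finset.card_range, nsmul_eq_mul,
      Finset.sum_ite_eq' (range p) 0 (fun _ => ((n:ℝ)-((p:ℝ)+(q:ℝ)-1)+2)),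
      if_pos (mem_range.2 (by omega))]
    ring
  have e2 : ∑ x ∈ Ico p (p+q-1), Dv p q n x = ((q:ℝ)-1) * 2 := by
    have step : ∀ x ∈ Ico p (p+q-1), Dv p q n x = 2 := by
      intro x hx; rw [mem_Ico] at hx
      unfold Dv
      rw [if_neg (by omega), if_pos (by omega)]
    rw [Finset.sum_congr rfl step, Finset.sum_const, Nat.card_Ico, nsmul_eq_mul,
      show p+q-1-p = q-1 from by omega, cast_q1 hq]
  have e3 : ∑ x ∈ Ico (p+q-1) n, Dv p q n x = ((n:ℝ)-((p:ℝ)+(q:ℝ)-1)) * 1 := by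
    have step : ∀ x ∈ Ico (p+q-1) n, Dv p q n x = 1 := by
      intro x hx; rw [mem_Ico] at hx
      unfold Dv
      rw [if_neg (by omega), if_neg (by omega)]
    rw [Finset.sum_congr rfl step, Finset.sum_const, Nat.card_Ico, nsmul_eq_mul,
      cast_tail hp hq hn]
  rw [e1, e2, e3]; ring

lemma W_P {p q n t : ℕ} (hp : 3 ≤ p) (hq : 3 ≤ q) (hn : p + q - 1 ≤ n)
    (h1 : p + q - 1 ≤ t) (h2 : t < n) :
    ∑ x ∈ range n, Dv p q n x * Psi p q t x = 2*(n:ℝ)+1 := by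
  have step : ∀ x ∈ range n, Dv p q n x * Psi p q t x
      = Dv p q n x - (if x = t then Dv p q n x else 0) := by
    intro x _; rw [Psi_P hp hq h1 x]
    by_cases hxt : x = t
    · rw [if_pos hxt, if_pos hxt]; ring
    · rw [if_neg hxt, if_neg hxt]; ring
  rw [Finset.sum_congr rfl step, Finset.sum_sub_distrib, SD hp hq hn,
    Finset.sum_ite_eq' (range n) t (Dv p q n), if_pos (mem_range.2 h2)]
  unfold Dv
  rw [if_neg (by omega), if_neg (by omega)]
  ring

end DRaux


namespace DRaux
attribute [local instance] Classical.propDecidable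

lemma sumW {p q n : ℕ} (hp : 3 ≤ p) (hq : 3 ≤ q) (hn : p + q - 1 ≤ n) :
    ∑ t ∈ range n, (∑ x ∈ range n, Dv p q n x * Psi p q t x)
      = ((p:ℝ)*((p:ℝ)-1)*((p:ℝ)+1)/6) * (1 + (2*(n:ℝ)-2*(p:ℝ)+2)/p)
        + ((q:ℝ)*((q:ℝ)-1)*((q:ℝ)+1)/6) * (1 + (2*(n:ℝ)-2*(q:ℝ)+2)/q)
        + ((n:ℝ)-((p:ℝ)+(q:ℝ)-1)) * (2*(n:ℝ)+1) := by
  have hp0 : (p:ℝ) ≠ 0 := Nat.cast_ne_zero.2 (by omega)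
  have hq0 : (q:ℝ) ≠ 0 := Nat.cast_ne_zero.2 (by omega)
  rw [split3 (show p ≤ p+q-1 by omega) hn]
  have e1 : ∑ t ∈ range p, (∑ x ∈ range n, Dv p q n x * Psi p q t x)
      = ((p:ℝ)*((p:ℝ)-1)*((p:ℝ)+1)/6) * (1 + (2*(n:ℝ)-2*(p:ℝ)+2)/p) := by
    have step : ∀ t ∈ range p, (∑ x ∈ range n, Dv p q n x * Psi p q t x)
        = ((t:ℝ)*((p:ℝ)-t)) * (1 + (2*(n:ℝ)-2*(p:ℝ)+2)/p) := by
      intro t ht; rw [mem_range] at ht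
      by_cases ht0 : t = 0
      · subst ht0
        rw [show ∑ x ∈ range n, Dv p q n x * Psi p q 0 x = 0 from
          Finset.sum_eq_zero (fun x _ => by rw [Psi_zero, mul_zero])]
        push_cast; ring
      · rw [W_A hp hq hn (by omega) (by omega)]
        field_simp
    rw [Finset.sum_congr rfl step, ← Finset.sum_mul, sum_tq]
  have e2 : ∑ t ∈ Ico p (p+q-1), (∑ x ∈ range n, Dv p q n x * Psi p q t x)
      = ((q:ℝ)*((q:ℝ)-1)*((q:ℝ)+1)/6) * (1 + (2*(n:ℝ)-2*(q:ℝ)+2)/q) := by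
    rw [midsum (show 1 ≤ q by omega) (fun t => ∑ x ∈ range n, Dv p q n x * Psi p q t x)]
    have step : ∀ j ∈ range (q-1), (∑ x ∈ range n, Dv p q n x * Psi p q (p+j) x)
        = (fun (t:ℕ) => ((t:ℝ)*((q:ℝ)-t)) * (1 + (2*(n:ℝ)-2*(q:ℝ)+2)/q)) (j+1) := by
      intro j hj; rw [mem_range] at hj
      rw [W_B hp hq hn (by omega) (by omega), show p+j-p+1 = j+1 from by omega]
      push_cast
      field_simp
    rw [Finset.sum_congr rfl step,
      peel (show 1 ≤ q by omega)
        (fun (t:ℕ) => ((t:ℝ)*((q:ℝ)-t)) * (1 + (2*(n:ℝ)-2*(q:ℝ)+2)/q)),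
      ← Finset.sum_mul, sum_tq]
    push_cast
    ring
  have e3 : ∑ t ∈ Ico (p+q-1) n, (∑ x ∈ range n, Dv p q n x * Psi p q t x)
      = ((n:ℝ)-((p:ℝ)+(q:ℝ)-1)) * (2*(n:ℝ)+1) := by
    have step : ∀ t ∈ Ico (p+q-1) n, (∑ x ∈ range n, Dv p q n x * Psi p q t x)
        = 2*(n:ℝ)+1 := by
      intro t ht; rw [mem_Ico] at ht
      exact W_P hp hq hn ht.1 ht.2
    rw [Finset.sum_congr rfl step, Finset.sum_const, Nat.card_Ico, nsmul_eq_mul,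
      cast_tail hp hq hn]
  rw [e1, e2, e3]

lemma sumDU {p q n : ℕ} (hp : 3 ≤ p) (hq : 3 ≤ q) (hn : p + q - 1 ≤ n) :
    ∑ t ∈ range n, Dv p q n t * (∑ x ∈ range n, Psi p q t x)
      = ((p:ℝ)*((p:ℝ)-1)*((p:ℝ)+1)/6) * (1 + (2*(n:ℝ)-2*(p:ℝ))/p)
        + ((q:ℝ)*((q:ℝ)-1)*((q:ℝ)+1)/6) * (1 + (2*(n:ℝ)-2*(q:ℝ))/q)
        + ((n:ℝ)-((p:ℝ)+(q:ℝ)-1)) * ((n:ℝ)-1) := by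
  have hp0 : (p:ℝ) ≠ 0 := Nat.cast_ne_zero.2 (by omega)
  have hq0 : (q:ℝ) ≠ 0 := Nat.cast_ne_zero.2 (by omega)
  rw [split3 (show p ≤ p+q-1 by omega) hn]
  have e1 : ∑ t ∈ range p, Dv p q n t * (∑ x ∈ range n, Psi p q t x)
      = ((p:ℝ)*((p:ℝ)-1)*((p:ℝ)+1)/6) * (1 + (2*(n:ℝ)-2*(p:ℝ))/p) := by
    have step : ∀ t ∈ range p, Dv p q n t * (∑ x ∈ range n, Psi p q t x)
        = ((t:ℝ)*((p:ℝ)-t)) * (1 + (2*(n:ℝ)-2*(p:ℝ))/p) := by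
      intro t ht; rw [mem_range] at ht
      by_cases ht0 : t = 0
      · subst ht0
        rw [show ∑ x ∈ range n, Psi p q 0 x = 0 from
          Finset.sum_eq_zero (fun x _ => Psi_zero p q x), mul_zero]
        push_cast; ring
      · rw [U_A hp hq hn (by omega) (by omega)]
        unfold Dv
        rw [if_neg ht0, if_pos (by omega)]
        field_simp
    rw [Finset.sum_congr rfl step, ← Finset.sum_mul, sum_tq]
  have e2 : ∑ t ∈ Ico p (p+q-1), Dv p q n t * (∑ x ∈ range n, Psi p q t x)
      = ((q:ℝ)*((q:ℝ)-1)*((q:ℝ)+1)/6) * (1 + (2*(n:ℝ)-2*(q:ℝ))/q) := by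
    rw [midsum (show 1 ≤ q by omega)
      (fun t => Dv p q n t * (∑ x ∈ range n, Psi p q t x))]
    have step : ∀ j ∈ range (q-1), Dv p q n (p+j) * (∑ x ∈ range n, Psi p q (p+j) x)
        = (fun (t:ℕ) => ((t:ℝ)*((q:ℝ)-t)) * (1 + (2*(n:ℝ)-2*(q:ℝ))/q)) (j+1) := by
      intro j hj; rw [mem_range] at hj
      rw [U_B hp hq hn (by omega) (by omega), show p+j-p+1 = j+1 from by omega]
      unfold Dv
      rw [if_neg (by omega), if_pos (by omega)]
      push_cast
      field_simp
    rw [Finset.sum_congr rfl step,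
      peel (show 1 ≤ q by omega)
        (fun (t:ℕ) => ((t:ℝ)*((q:ℝ)-t)) * (1 + (2*(n:ℝ)-2*(q:ℝ))/q)),
      ← Finset.sum_mul, sum_tq]
    push_cast
    ring
  have e3 : ∑ t ∈ Ico (p+q-1) n, Dv p q n t * (∑ x ∈ range n, Psi p q t x)
      = ((n:ℝ)-((p:ℝ)+(q:ℝ)-1)) * ((n:ℝ)-1) := by
    have step : ∀ t ∈ Ico (p+q-1) n, Dv p q n t * (∑ x ∈ range n, Psi p q t x)
        = (n:ℝ)-1 := by
      intro t ht; rw [mem_Ico] at ht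
      rw [U_P hp hq ht.1 ht.2]
      unfold Dv
      rw [if_neg (by omega), if_neg (by omega)]
      ring
    rw [Finset.sum_congr rfl step, Finset.sum_const, Nat.card_Ico, nsmul_eq_mul,
      cast_tail hp hq hn]
  rw [e1, e2, e3]

end DRaux

/-- Closed formula for the degree resistance distance of `S_n^{p,q}`. -/
theorem DR_SGraph (p q s n : ℕ) (hp : 3 ≤ p) (hq : 3 ≤ q) (hn : n = p + q + s - 1) :
    DR (SGraph p q n) =
      (1/3) * (-(p : ℝ)^3 - (q : ℝ)^3 + (2*(n : ℝ) + 1) * ((p : ℝ)^2 + (q : ℝ)^2)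
        + (1 - 9*(n : ℝ)) * ((p : ℝ) + (q : ℝ)) + 9*(n : ℝ)^2 + 5*(n : ℝ) - 2) := by
  classical
  have hn' : p + q - 1 ≤ n := by omega
  have hp0 : (p:ℝ) ≠ 0 := Nat.cast_ne_zero.2 (by omega)
  have hq0 : (q:ℝ) ≠ 0 := Nat.cast_ne_zero.2 (by omega)
  open DRaux in
  unfold DR
  have e : ∑ v : Fin n, ∑ u : Fin n,
        ((vdeg (SGraph p q n) u : ℝ) + (vdeg (SGraph p q n) v : ℝ))
          * eRes (SGraph p q n) u v
      = ∑ y ∈ range n, ∑ x ∈ range n,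
          (DRaux.Dv p q n x + DRaux.Dv p q n y) * (DRaux.Psi p q y x + DRaux.Psi p q x y) := by
    rw [← Fin.sum_univ_eq_sum_range (fun y => ∑ x ∈ range n,
      (DRaux.Dv p q n x + DRaux.Dv p q n y) * (DRaux.Psi p q y x + DRaux.Psi p q x y)) n]
    refine Finset.sum_congr rfl fun v _ => ?_
    rw [← Fin.sum_univ_eq_sum_range (fun x =>
      (DRaux.Dv p q n x + DRaux.Dv p q n v.val)
        * (DRaux.Psi p q v.val x + DRaux.Psi p q x v.val)) n]
    refine Finset.sum_congr rfl fun u _ => ?_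
    rw [DRaux.vdeg_Dv hp hq hn' u, DRaux.vdeg_Dv hp hq hn' v,
      DRaux.eRes_SGraph hp hq hn' u v]
  rw [e]
  have expand : ∑ y ∈ range n, ∑ x ∈ range n,
        (DRaux.Dv p q n x + DRaux.Dv p q n y) * (DRaux.Psi p q y x + DRaux.Psi p q x y)
      = (∑ y ∈ range n, ∑ x ∈ range n, DRaux.Dv p q n x * DRaux.Psi p q y x)
        + (∑ y ∈ range n, ∑ x ∈ range n, DRaux.Dv p q n x * DRaux.Psi p q x y)
        + (∑ y ∈ range n, ∑ x ∈ range n, DRaux.Dv p q n y * DRaux.Psi p q y x)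
        + (∑ y ∈ range n, ∑ x ∈ range n, DRaux.Dv p q n y * DRaux.Psi p q x y) := by
    rw [← Finset.sum_add_distrib, ← Finset.sum_add_distrib, ← Finset.sum_add_distrib]
    refine Finset.sum_congr rfl fun y _ => ?_
    rw [← Finset.sum_add_distrib, ← Finset.sum_add_distrib, ← Finset.sum_add_distrib]
    exact Finset.sum_congr rfl fun x _ => by ring
  rw [expand]
  have p1 : (∑ y ∈ range n, ∑ x ∈ range n, DRaux.Dv p q n x * DRaux.Psi p q y x)
      = ∑ t ∈ range n, (∑ x ∈ range n, DRaux.Dv p q n x * DRaux.Psi p q t x) := rfl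
  have p2 : (∑ y ∈ range n, ∑ x ∈ range n, DRaux.Dv p q n x * DRaux.Psi p q x y)
      = ∑ t ∈ range n, DRaux.Dv p q n t * (∑ x ∈ range n, DRaux.Psi p q t x) := by
    rw [Finset.sum_comm]
    exact Finset.sum_congr rfl fun x _ => (Finset.mul_sum _ _ _).symm
  have p3 : (∑ y ∈ range n, ∑ x ∈ range n, DRaux.Dv p q n y * DRaux.Psi p q y x)
      = ∑ t ∈ range n, DRaux.Dv p q n t * (∑ x ∈ range n, DRaux.Psi p q t x) := by
    exact Finset.sum_congr rfl fun y _ => (Finset.mul_sum _ _ _).symm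
  have p4 : (∑ y ∈ range n, ∑ x ∈ range n, DRaux.Dv p q n y * DRaux.Psi p q x y)
      = ∑ t ∈ range n, (∑ x ∈ range n, DRaux.Dv p q n x * DRaux.Psi p q t x) := by
    rw [Finset.sum_comm]
  rw [p1, p2, p3, p4, DRaux.sumW hp hq hn', DRaux.sumDU hp hq hn']
  field_simp
  ring
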